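/- arXiv:2001.08846 — 2 statements merged into one kernel-verified Lean document; each statement's English description precedes it below -/
import Mathlib

section
/- (Ordinal extension nonregularity theorem.) If a language A ⊆ Σ* has unbounded ordinal extensions, then A is not regular. -/
/-- Shortlex order on strings: first by length, then lexicographically. -/
def ShortlexLt {σ : Type*} [LinearOrder σ] (x y : List σ) : Prop :=
  x.length < y.length ∨ (x.length = y.length ∧ List.Lex (· < ·) x y)

/-- `y` is the `j`-th `A`-extension of `x`: `y ∈ A_x` and exactly `j - 1`
elements of `A_x = {z | x ++ z ∈ A}` are shortlex-smaller than `y`. -/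
def IsNthExt {σ : Type*} [LinearOrder σ] (A : Set (List σ)) (j : ℕ) (x y : List σ) : Prop :=
  x ++ y ∈ A ∧ {z | x ++ z ∈ A ∧ ShortlexLt z y}.encard = ((j - 1 : ℕ) : ℕ∞)

/-- `A^(j)`: the set of all `j`-th `A`-extensions. -/
def ExtSet {σ : Type*} [LinearOrder σ] (A : Set (List σ)) (j : ℕ) : Set (List σ) :=
  {y | ∃ x, IsNthExt A j x y}

lemma slt_irrefl {σ : Type*} [LinearOrder σ] (y : List σ) : ¬ ShortlexLt y y := by
  haveI := List.Lex.asymm (α := σ) (· < ·)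
  rintro (h | ⟨_, h⟩)
  · exact lt_irrefl _ h
  · exact irrefl _ h

lemma slt_trans {σ : Type*} [LinearOrder σ] {x y z : List σ}
    (h1 : ShortlexLt x y) (h2 : ShortlexLt y z) : ShortlexLt x z := by
  haveI : IsTrans (List σ) (List.Lex (· < ·)) := ⟨fun _ _ _ a b => List.lt_trans (α := σ) a b⟩
  rcases h1 with h1 | ⟨e1, l1⟩ <;> rcases h2 with h2 | ⟨e2, l2⟩
  · exact Or.inl (h1.trans h2)
  · exact Or.inl (e2 ▸ h1)
  · exact Or.inl (e1 ▸ h2)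
  · exact Or.inr ⟨e1.trans e2, _root_.trans l1 l2⟩

lemma slt_trichotomy {σ : Type*} [LinearOrder σ] (x y : List σ) :
    ShortlexLt x y ∨ x = y ∨ ShortlexLt y x := by
  haveI := List.Lex.trichotomous (α := σ) (· < ·)
  rcases lt_trichotomy x.length y.length with h | h | h
  · exact Or.inl (Or.inl h)
  · rcases trichotomous_of (List.Lex (· < ·)) x y with l | e | l
    · exact Or.inl (Or.inr ⟨h, l⟩)
    · exact Or.inr (Or.inl e)
    · exact Or.inr (Or.inr (Or.inr ⟨h.symm, l⟩))
  · exact Or.inr (Or.inr (Or.inl h))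

/-- Uniqueness of the element with exactly `k` smaller elements in a set. -/
lemma ext_unique {σ : Type*} [LinearOrder σ] (S : Set (List σ)) (k : ℕ) {y₁ y₂ : List σ}
    (m1 : y₁ ∈ S) (c1 : {z | z ∈ S ∧ ShortlexLt z y₁}.encard = (k : ℕ∞))
    (m2 : y₂ ∈ S) (c2 : {z | z ∈ S ∧ ShortlexLt z y₂}.encard = (k : ℕ∞)) : y₁ = y₂ := by
  have key : ∀ a b : List σ, a ∈ S → ShortlexLt a b →
      {z | z ∈ S ∧ ShortlexLt z a}.encard = (k : ℕ∞) →
      {z | z ∈ S ∧ ShortlexLt z b}.encard = (k : ℕ∞) → False := by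
    intro a b ha hab ca cb
    have hsub : insert a {z | z ∈ S ∧ ShortlexLt z a} ⊆ {z | z ∈ S ∧ ShortlexLt z b} := by
      rintro z (rfl | ⟨hz1, hz2⟩)
      · exact ⟨ha, hab⟩
      · exact ⟨hz1, slt_trans hz2 hab⟩
    have hnm : a ∉ {z | z ∈ S ∧ ShortlexLt z a} := fun h => slt_irrefl a h.2
    have := Set.encard_le_encard hsub
    rw [Set.encard_insert_of_notMem hnm, ca, cb] at this
    have hk : ((k : ℕ∞)) < (k : ℕ∞) + 1 := by
      exact ENat.lt_add_one_iff (by simp) |>.mpr le_rfl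
    exact absurd this (not_le.mpr hk)
  rcases slt_trichotomy y₁ y₂ with h | h | h
  · exact (key y₁ y₂ m1 h c1 c2).elim
  · exact h
  · exact (key y₂ y₁ m2 h c2 c1).elim

/-- Ordinal extension nonregularity theorem: if `A` has unbounded ordinal
extensions, then `A` is not regular. -/
theorem stmt1 {σ : Type*} [Fintype σ] [Nonempty σ] [LinearOrder σ]
    (A : Set (List σ))
    (hub : ¬ ∃ m : ℕ, 1 ≤ m ∧ ∀ j : ℕ, 1 ≤ j → (ExtSet A j).encard ≤ (m : ℕ∞)) :
    ¬ Language.IsRegular A := by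
  rintro ⟨Q, hQ, M, hM⟩
  apply hub
  refine ⟨max (Fintype.card Q) 1, le_max_right _ _, fun j _ => ?_⟩
  classical
  -- map each element of ExtSet A j to a state
  set f : List σ → Q := fun y =>
    if h : ∃ x, IsNthExt A j x y then M.eval h.choose else M.start with hf
  have hinj : Set.InjOn f (ExtSet A j) := by
    intro y₁ hy₁ y₂ hy₂ hfe
    have hy₁' : ∃ x, IsNthExt A j x y₁ := hy₁
    have hy₂' : ∃ x, IsNthExt A j x y₂ := hy₂
    have hfe' : M.eval hy₁'.choose = M.eval hy₂'.choose := by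
      simpa only [hf, dif_pos hy₁', dif_pos hy₂'] using hfe
    obtain ⟨h1a, h1c⟩ := hy₁'.choose_spec
    obtain ⟨h2a, h2c⟩ := hy₂'.choose_spec
    set x₁ := hy₁'.choose
    set x₂ := hy₂'.choose
    have hsame : ∀ z : List σ, x₁ ++ z ∈ A ↔ x₂ ++ z ∈ A := by
      intro z
      have e1 : (x₁ ++ z ∈ A) ↔ M.evalFrom (M.eval x₁) z ∈ M.accept := by
        rw [← hM]; exact (DFA.mem_accepts _).trans (by rw [DFA.eval, DFA.evalFrom_of_append])
      have e2 : (x₂ ++ z ∈ A) ↔ M.evalFrom (M.eval x₂) z ∈ M.accept := by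
        rw [← hM]; exact (DFA.mem_accepts _).trans (by rw [DFA.eval, DFA.evalFrom_of_append])
      rw [e1, e2, hfe']
    have h2a' : x₁ ++ y₂ ∈ A := (hsame y₂).mpr h2a
    have h2c' : {z | z ∈ {w | x₁ ++ w ∈ A} ∧ ShortlexLt z y₂}.encard = ((j-1 : ℕ) : ℕ∞) := by
      rw [show {z | z ∈ {w | x₁ ++ w ∈ A} ∧ ShortlexLt z y₂} = {z | x₂ ++ z ∈ A ∧ ShortlexLt z y₂}
        from Set.ext fun z => by simp [Set.mem_setOf_eq, hsame z]]
      exact h2c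
    exact ext_unique {w | x₁ ++ w ∈ A} (j-1) h1a h1c h2a' h2c'
  have := Set.encard_le_encard_of_injOn (f := f) (s := ExtSet A j) (t := Set.univ)
    (fun _ _ => Set.mem_univ _) hinj
  refine this.trans ?_
  rw [Set.encard_univ, ENat.card_eq_coe_fintype_card]
  exact_mod_cast Nat.cast_le.mpr (le_max_left (Fintype.card Q) 1)
end

section
/- For every set I ⊆ ℕ and every j ≥ 1, A[I]^(j) ⊆ B_2^j. -/
/-- `I' = {3i : i ∈ ℕ} ∪ {3i+1 : i ∈ I} ∪ {3i+2 : i ∈ ℕ \\ I}`. -/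
def Iext (I : Set ℕ) : Set ℕ :=
  {k | (∃ i : ℕ, k = 3 * i) ∨ (∃ i ∈ I, k = 3 * i + 1) ∨ (∃ i : ℕ, i ∉ I ∧ k = 3 * i + 2)}

/-- The language `A[I] = {0^n : n ∈ I'}` of Construction 4.1. -/
def AofI (I : Set ℕ) : Set (List (Fin 1)) :=
  {w | ∃ n ∈ Iext I, w = List.replicate n 0}

/-- The languages `B_2^j` of Construction 4.4 (over the one-letter alphabet). -/
def B2 : ℕ → Language (Fin 1)
  | 0 => 0
  | 1 => {[], [0]}
  | 2 => {[0], [0, 0], [0, 0, 0]}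
  | (n + 3) => if (n + 3) % 2 = 0 then B2 (n + 2) * {[0, 0]} else B2 (n + 2) * {[0]}

open scoped Classical

lemma list_fin1_eq (w : List (Fin 1)) : w = List.replicate w.length 0 :=
  List.eq_replicate_length.mpr (fun b _ => Subsingleton.elim b 0)

lemma memAofI (I : Set ℕ) (w : List (Fin 1)) : w ∈ AofI I ↔ w.length ∈ Iext I := by
  constructor
  · rintro ⟨n, hn, rfl⟩; simpa using hn
  · intro h; exact ⟨w.length, h, list_fin1_eq w⟩

lemma lex_length {z y : List (Fin 1)} (h : List.Lex (· < ·) z y) : z.length < y.length := by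
  induction h with
  | nil => simp
  | rel h => exact absurd (Subsingleton.elim _ _) (ne_of_lt h)
  | cons _ ih => simpa using ih

lemma shortlex_iff (z y : List (Fin 1)) : ShortlexLt z y ↔ z.length < y.length := by
  constructor
  · rintro (h | ⟨_, hl⟩)
    · exact h
    · exact lex_length hl
  · exact Or.inl

lemma memIext (I : Set ℕ) (n : ℕ) :
    n ∈ Iext I ↔ (n % 3 = 0 ∨ (n % 3 = 1 ∧ n / 3 ∈ I) ∨ (n % 3 = 2 ∧ n / 3 ∉ I)) := by
  constructor
  · rintro (⟨i, rfl⟩ | ⟨i, hi, rfl⟩ | ⟨i, hi, rfl⟩)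
    · left; omega
    · right; left; exact ⟨by omega, by rwa [show (3*i+1)/3 = i by omega]⟩
    · right; right; exact ⟨by omega, by rwa [show (3*i+2)/3 = i by omega]⟩
  · rintro (h | ⟨h, hi⟩ | ⟨h, hi⟩)
    · exact Or.inl ⟨n/3, by omega⟩
    · exact Or.inr (Or.inl ⟨n/3, hi, by omega⟩)
    · exact Or.inr (Or.inr ⟨n/3, hi, by omega⟩)

noncomputable def Fc (I : Set ℕ) (n : ℕ) : ℕ :=
  ((Finset.range n).filter (fun k => k ∈ Iext I)).card

lemma Fc_succ (I : Set ℕ) (n : ℕ) :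
    Fc I (n+1) = Fc I n + (if n ∈ Iext I then 1 else 0) := by
  unfold Fc
  rw [Finset.range_add_one, Finset.filter_insert]
  split_ifs with h
  · rw [Finset.card_insert_of_notMem (by simp)]
  · simp

lemma Fspec (I : Set ℕ) (n : ℕ) :
    (n % 3 = 0 → Fc I n = 2*(n/3)) ∧
    (n % 3 = 1 → Fc I n = 2*(n/3) + 1) ∧
    (n % 3 = 2 → (Fc I n = 2*(n/3) + 1 ∧ n ∈ Iext I) ∨ (Fc I n = 2*(n/3) + 2 ∧ n ∉ Iext I)) := by
  induction n with
  | zero =>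
    refine ⟨fun _ => by simp [Fc], fun h => by omega, fun h => by omega⟩
  | succ n ih =>
    obtain ⟨ih0, ih1, ih2⟩ := ih
    have hs := Fc_succ I n
    rcases (show n % 3 = 0 ∨ n % 3 = 1 ∨ n % 3 = 2 by omega) with h|h|h
    · have hn : n ∈ Iext I := (memIext I n).2 (Or.inl h)
      rw [if_pos hn] at hs
      have h0 := ih0 h
      exact ⟨fun h' => absurd h' (by omega), fun _ => by omega, fun h' => absurd h' (by omega)⟩
    · have h1 := ih1 h
      have hq : (n+1)/3 = n/3 := by omega
      by_cases hI : n/3 ∈ I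
      · have hn : n ∈ Iext I := (memIext I n).2 (Or.inr (Or.inl ⟨h, hI⟩))
        rw [if_pos hn] at hs
        refine ⟨fun h' => absurd h' (by omega), fun h' => absurd h' (by omega), fun _ => ?_⟩
        refine Or.inr ⟨by omega, fun hmm => ?_⟩
        rcases (memIext I (n+1)).1 hmm with c | ⟨c, _⟩ | ⟨_, hq'⟩
        · omega
        · omega
        · exact hq' (hq ▸ hI)
      · have hn : n ∉ Iext I := by
          intro hmm
          rcases (memIext I n).1 hmm with c | ⟨_, hq'⟩ | ⟨c, _⟩
          · omega
          · exact hI hq'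
          · omega
        rw [if_neg hn] at hs
        refine ⟨fun h' => absurd h' (by omega), fun h' => absurd h' (by omega), fun _ => ?_⟩
        refine Or.inl ⟨by omega, (memIext I (n+1)).2 (Or.inr (Or.inr ⟨by omega, hq ▸ hI⟩))⟩
    · rcases ih2 h with ⟨hFn, hn⟩ | ⟨hFn, hn⟩
      · rw [if_pos hn] at hs
        exact ⟨fun _ => by omega, fun h' => absurd h' (by omega), fun h' => absurd h' (by omega)⟩
      · rw [if_neg hn] at hs
        exact ⟨fun _ => by omega, fun h' => absurd h' (by omega), fun h' => absurd h' (by omega)⟩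

lemma count_eq (I : Set ℕ) (m ℓ : ℕ) :
    Fc I m + ((Finset.range ℓ).filter (fun k => m + k ∈ Iext I)).card = Fc I (m + ℓ) := by
  induction ℓ with
  | zero => simp [Fc]
  | succ n ih =>
    rw [show m + (n+1) = (m+n)+1 by omega, Fc_succ, Finset.range_add_one, Finset.filter_insert]
    split_ifs with h
    · rw [Finset.card_insert_of_notMem (by simp)]
      omega
    · omega

set_option maxHeartbeats 1000000 in
lemma key (I : Set ℕ) (j m ℓ : ℕ) (hj : 1 ≤ j) (hmem : m + ℓ ∈ Iext I)
    (h : Fc I m + (j - 1) = Fc I (m + ℓ)) :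
    (j = 1 ∧ ℓ ≤ 1) ∨ (2 ≤ j ∧ 3*(j/2) + j % 2 - 2 ≤ ℓ ∧ ℓ ≤ 3*(j/2) + j % 2) := by
  obtain ⟨hm0, hm1, hm2⟩ := Fspec I m
  obtain ⟨hn0, hn1, hn2⟩ := Fspec I (m + ℓ)
  have hm : 3 * Fc I m = 2*m ∨ 3 * Fc I m = 2*m+1 ∨ 3 * Fc I m + 1 = 2*m ∨ 3 * Fc I m = 2*m+2 := by
    rcases (show m % 3 = 0 ∨ m % 3 = 1 ∨ m % 3 = 2 by omega) with h'|h'|h'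
    · have := hm0 h'; omega
    · have := hm1 h'; omega
    · rcases hm2 h' with ⟨h'', -⟩ | ⟨h'', -⟩ <;> omega
  have hn : 3 * Fc I (m+ℓ) = 2*(m+ℓ) ∨ 3 * Fc I (m+ℓ) = 2*(m+ℓ)+1 ∨
      3 * Fc I (m+ℓ) + 1 = 2*(m+ℓ) := by
    rcases (show (m+ℓ) % 3 = 0 ∨ (m+ℓ) % 3 = 1 ∨ (m+ℓ) % 3 = 2 by omega) with h'|h'|h'
    · have := hn0 h'; omega
    · have := hn1 h'; omega
    · rcases hn2 h' with ⟨h'', -⟩ | ⟨-, hn'⟩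
      · omega
      · exact absurd hmem hn'
  omega

lemma B2_mem : ∀ n ℓ : ℕ, 3*((n+2)/2) + (n+2) % 2 - 2 ≤ ℓ → ℓ ≤ 3*((n+2)/2) + (n+2) % 2 →
    List.replicate ℓ (0 : Fin 1) ∈ B2 (n+2) := by
  intro n
  induction n with
  | zero =>
    intro ℓ h1 h2
    have : ℓ = 1 ∨ ℓ = 2 ∨ ℓ = 3 := by omega
    rcases this with rfl | rfl | rfl <;> show _ ∈ ({[0], [0, 0], [0, 0, 0]} : Set (List (Fin 1)))
    · exact Set.mem_insert _ _
    · exact Set.mem_insert_of_mem _ (Set.mem_insert _ _)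
    · exact Set.mem_insert_of_mem _ (Set.mem_insert_of_mem _ rfl)
  | succ n ih =>
    intro ℓ h1 h2
    show List.replicate ℓ (0 : Fin 1) ∈ B2 (n+3)
    rw [show B2 (n+3) = if (n+3) % 2 = 0 then B2 (n+2) * {[0,0]} else B2 (n+2) * {[0]} from rfl]
    by_cases hpar : (n+3) % 2 = 0
    · rw [if_pos hpar]
      refine Language.mem_mul.2 ⟨List.replicate (ℓ-2) 0, ih (ℓ-2) (by omega) (by omega),
        [0,0], rfl, ?_⟩
      rw [show ([0,0] : List (Fin 1)) = List.replicate 2 0 from rfl, ← List.replicate_add]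
      congr 1
      omega
    · rw [if_neg hpar]
      refine Language.mem_mul.2 ⟨List.replicate (ℓ-1) 0, ih (ℓ-1) (by omega) (by omega),
        [0], rfl, ?_⟩
      rw [show ([0] : List (Fin 1)) = List.replicate 1 0 from rfl, ← List.replicate_add]
      congr 1
      omega

/-- For every `I ⊆ ℕ` and every `j ≥ 1`, `A[I]^(j) ⊆ B_2^j`. -/
theorem stmt10 (I : Set ℕ) (j : ℕ) (hj : 1 ≤ j) :
    ExtSet (AofI I) j ⊆ B2 j := by
  intro y hy
  obtain ⟨x, hxA, hcard⟩ := hy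
  have hmem : x.length + y.length ∈ Iext I := by
    have := (memAofI I (x ++ y)).1 hxA
    simpa using this
  have hset : {z | x ++ z ∈ AofI I ∧ ShortlexLt z y}
      = ↑(((Finset.range y.length).filter (fun k => x.length + k ∈ Iext I)).image
          (fun k => List.replicate k (0 : Fin 1))) := by
    ext z
    simp only [Set.mem_setOf_eq, Finset.coe_image, Set.mem_image, Finset.mem_coe,
      Finset.mem_filter, Finset.mem_range]
    constructor
    · rintro ⟨h1, h2⟩
      refine ⟨z.length, ⟨(shortlex_iff z y).1 h2, ?_⟩, (list_fin1_eq z).symm⟩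
      have := (memAofI I (x ++ z)).1 h1
      simpa using this
    · rintro ⟨k, ⟨hk, hkI⟩, rfl⟩
      constructor
      · apply (memAofI I _).2
        simpa using hkI
      · apply (shortlex_iff _ _).2
        simpa using hk
  rw [hset, Set.encard_coe_eq_coe_finsetCard] at hcard
  have hinj : Function.Injective (fun k => List.replicate k (0 : Fin 1)) := by
    intro a b hab
    simpa using congrArg List.length hab
  rw [Finset.card_image_of_injective _ hinj] at hcard
  have hcard' : ((Finset.range y.length).filter (fun k => x.length + k ∈ Iext I)).card
      = j - 1 := by exact_mod_cast hcard
  have hF := count_eq I x.length y.length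
  rw [hcard'] at hF
  have hkey := key I j x.length y.length hj hmem hF
  have hy0 : y = List.replicate y.length 0 := list_fin1_eq y
  rcases hkey with ⟨hj1, hl⟩ | ⟨hj2, hl1, hl2⟩
  · subst hj1
    have : y.length = 0 ∨ y.length = 1 := by omega
    rcases this with h | h <;> rw [hy0, h] <;> show _ ∈ ({[], [0]} : Set (List (Fin 1)))
    · exact Set.mem_insert _ _
    · exact Set.mem_insert_of_mem _ rfl
  · have hmemB := B2_mem (j - 2) y.length (by omega) (by omega)
    rw [Nat.sub_add_cancel hj2] at hmemB
    rw [hy0]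
    exact hmemB
end
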